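/- Let G be a finite simple graph, n ≥ 1, and let U assign to every dart d an invertible n×n complex matrix such that U(reversal of d) = (U d)⁻¹. Define the block matrix T, indexed by pairs (dart, index in Fin n), whose (d',d) block equals U d if d' follows d without backtracking and 0 otherwise, and the block matrix Δ(u), indexed by pairs (vertex, index in Fin n), whose (x,y) block equals (1 + u²(deg x − 1))·Iₙ if x = y, equals −u·U((y,x)) if x and y are adjacent, and 0 otherwise. Then for every complex u, (1 − u²)^{n|V|} · det(I − u·T) = (1 − u²)^{n|E|} · det(Δ(u)). -/

import Mathlib

set_option linter.unusedSectionVars false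
set_option maxHeartbeats 1000000


open Matrix

variable {V : Type*}

/-- A dart `d'` follows a dart `d` without backtracking. -/
def FollowsNB {G : SimpleGraph V} (d' d : G.Dart) : Prop :=
  d'.fst = d.snd ∧ d' ≠ d.symm

instance {G : SimpleGraph V} [DecidableEq V] (d' d : G.Dart) : Decidable (FollowsNB d' d) :=
  inferInstanceAs (Decidable (_ ∧ _))

/-- The block edge-transfer matrix `T` twisted by the potential `U`: the `(d', d)` block
equals `U d` if `d'` follows `d` without backtracking, and `0` otherwise. -/
def Tblock (G : SimpleGraph V) [DecidableEq V] (n : ℕ)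
    (U : G.Dart → Matrix (Fin n) (Fin n) ℂ) :
    Matrix (G.Dart × Fin n) (G.Dart × Fin n) ℂ :=
  fun p q => if FollowsNB p.1 q.1 then U q.1 p.2 q.2 else 0

/-- The block deformed Laplacian `Δ(u)`: the `(x, y)` block equals
`(1 + u²(deg x − 1))·Iₙ` if `x = y`, equals `−u·U((y,x))` if `x` and `y` are adjacent,
and `0` otherwise. -/
noncomputable def DeltaBlock (G : SimpleGraph V) [Fintype V] [DecidableEq V]
    [DecidableRel G.Adj] (n : ℕ) (U : G.Dart → Matrix (Fin n) (Fin n) ℂ) (u : ℂ) :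
    Matrix (V × Fin n) (V × Fin n) ℂ :=
  fun p q =>
    if p.1 = q.1 then
      (if p.2 = q.2 then 1 + u ^ 2 * ((G.degree p.1 : ℂ) - 1) else 0)
    else if h : G.Adj p.1 q.1 then
      -u * U ⟨(q.1, p.1), h.symm⟩ p.2 q.2
    else 0


section Aux

variable {V : Type*} (G : SimpleGraph V) [Fintype V] [DecidableEq V] [DecidableRel G.Adj]
  (n : ℕ) (U : G.Dart → Matrix (Fin n) (Fin n) ℂ)

/-- weighted head incidence -/
noncomputable def mNU : Matrix (V × Fin n) (G.Dart × Fin n) ℂ :=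
  fun p q => if q.1.snd = p.1 then U q.1 p.2 q.2 else 0

noncomputable def mNbInv : Matrix (G.Dart × Fin n) (V × Fin n) ℂ :=
  fun p q => if p.1.snd = q.1 then (U p.1)⁻¹ p.2 q.2 else 0

def mSb : Matrix (G.Dart × Fin n) (V × Fin n) ℂ :=
  fun p q => if p.1.fst = q.1 ∧ p.2 = q.2 then 1 else 0

noncomputable def mJU : Matrix (G.Dart × Fin n) (G.Dart × Fin n) ℂ :=
  fun p q => if q.1 = p.1.symm then U q.1 p.2 q.2 else 0

def mDg : Matrix (V × Fin n) (V × Fin n) ℂ :=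
  fun p q => if p.1 = q.1 ∧ p.2 = q.2 then (G.degree p.1 : ℂ) else 0

noncomputable def mAt : Matrix (V × Fin n) (V × Fin n) ℂ :=
  fun p q => if h : G.Adj q.1 p.1 then U ⟨(q.1, p.1), h⟩ p.2 q.2 else 0

lemma dart_snd_card (v : V) : (Finset.univ.filter (fun d : G.Dart => d.snd = v)).card = G.degree v := by
  rw [← SimpleGraph.dart_fst_fiber_card_eq_degree]
  apply Finset.card_nbij (fun d => d.symm)
  · intro d hd; simpa using (by simpa using hd : d.snd = v)
  · intro d hd d' hd' h
    simpa using congrArg SimpleGraph.Dart.symm h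
  · intro d hd
    exact ⟨d.symm, by simpa using (by simpa using hd : d.fst = v), by simp⟩

end Aux

section Lems

variable {V : Type*} (G : SimpleGraph V) [Fintype V] [DecidableEq V] [DecidableRel G.Adj]
  (n : ℕ) (U : G.Dart → Matrix (Fin n) (Fin n) ℂ)
  (hUinv : ∀ d, IsUnit (U d)) (hUrev : ∀ d, U d.symm = (U d)⁻¹)

include hUinv hUrev

lemma L1 : Tblock G n U = mSb G n * mNU G n U - mJU G n U := by
  ext ⟨d, i⟩ ⟨e, j⟩
  have hmul : (mSb G n * mNU G n U) (d, i) (e, j) = if d.fst = e.snd then U e i j else 0 := by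
    rw [Matrix.mul_apply, Fintype.sum_prod_type]
    rw [Finset.sum_eq_single d.fst]
    · simp [mSb, mNU, Finset.sum_ite_eq, eq_comm]
    · intro x _ hx; simp only [mSb, mNU]
      rw [Finset.sum_eq_zero]; intro k _
      simp [Ne.symm hx]
    · simp
  simp only [Matrix.sub_apply, hmul, Tblock, mJU, FollowsNB]
  by_cases he : e = d.symm
  · subst he
    simp [SimpleGraph.Dart.symm_symm, d.symm_symm]
  · have hd : d ≠ e.symm := by
      intro h; exact he (by rw [h, SimpleGraph.Dart.symm_symm])
    simp [he, hd]


lemma L2 : mNU G n U * mNbInv G n U = mDg G n := by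
  ext ⟨x, i⟩ ⟨y, j⟩
  rw [Matrix.mul_apply, Fintype.sum_prod_type]
  have key : ∀ d : G.Dart, (∑ k, mNU G n U (x, i) (d, k) * mNbInv G n U (d, k) (y, j))
      = if d.snd = x ∧ d.snd = y then (U d * (U d)⁻¹) i j else 0 := by
    intro d
    by_cases h1 : d.snd = x <;> by_cases h2 : d.snd = y <;>
      simp [mNU, mNbInv, h1, h2, Matrix.mul_apply]
  simp only [key]
  by_cases hxy : x = y
  · subst hxy
    have hU : ∀ d : G.Dart, U d * (U d)⁻¹ = 1 := fun d =>
      Matrix.mul_nonsing_inv _ ((Matrix.isUnit_iff_isUnit_det _).mp (hUinv d))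
    simp only [hU, and_self, mDg, if_pos rfl, true_and]
    by_cases hij : i = j
    · subst hij
      simp only [Matrix.one_apply_eq, if_pos rfl, if_true]
      rw [Finset.sum_boole]
      norm_cast
      exact dart_snd_card G x
    · simp [Matrix.one_apply_ne hij, hij]
  · simp only [mDg, hxy, false_and, if_false]
    rw [Finset.sum_eq_zero]
    intro d _
    by_cases h1 : d.snd = x <;> by_cases h2 : d.snd = y <;> simp_all

lemma L3 : mNU G n U * mSb G n = mAt G n U := by
  ext ⟨x, i⟩ ⟨y, j⟩
  rw [Matrix.mul_apply, Fintype.sum_prod_type]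
  have key : ∀ d : G.Dart, (∑ k, mNU G n U (x, i) (d, k) * mSb G n (d, k) (y, j))
      = if d.fst = y ∧ d.snd = x then U d i j else 0 := by
    intro d
    by_cases h1 : d.snd = x <;> by_cases h2 : d.fst = y <;>
      simp [mNU, mSb, h1, h2, Finset.sum_ite_eq, and_comm]
  simp only [key, mAt]
  by_cases h : G.Adj y x
  · rw [Finset.sum_eq_single (⟨(y, x), h⟩ : G.Dart)]
    · simp [h]
    · intro d _ hd
      rw [if_neg]
      rintro ⟨h1, h2⟩
      exact hd (SimpleGraph.Dart.ext _ _ (Prod.ext h1 h2))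
    · simp
  · rw [dif_neg h, Finset.sum_eq_zero]
    intro d _
    rw [if_neg]
    rintro ⟨h1, h2⟩
    exact h (h1 ▸ h2 ▸ d.adj)

lemma L6 : mJU G n U * mNbInv G n U = mSb G n := by
  ext ⟨d, i⟩ ⟨x, j⟩
  rw [Matrix.mul_apply, Fintype.sum_prod_type]
  rw [Finset.sum_eq_single d.symm]
  · have hU : U d.symm * (U d.symm)⁻¹ = 1 :=
      Matrix.mul_nonsing_inv _ ((Matrix.isUnit_iff_isUnit_det _).mp (hUinv _))
    by_cases hx : d.fst = x
    · simp [mJU, mNbInv, mSb, hx, ← Matrix.mul_apply, hU, Matrix.one_apply]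
    · simp [mJU, mNbInv, mSb, hx]
  · intro e _ he
    rw [Finset.sum_eq_zero]; intro k _
    simp [mJU, he]
  · simp

lemma L7 : mJU G n U * mSb G n = mNbInv G n U := by
  ext ⟨d, i⟩ ⟨x, j⟩
  rw [Matrix.mul_apply, Fintype.sum_prod_type]
  rw [Finset.sum_eq_single d.symm]
  · by_cases hx : d.snd = x
    · simp [mJU, mSb, mNbInv, hx, hUrev d, Finset.sum_ite_eq]
    · simp [mJU, mSb, mNbInv, hx]
  · intro e _ he
    rw [Finset.sum_eq_zero]; intro k _
    simp [mJU, he]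
  · simp


lemma L4 (u : ℂ) : DeltaBlock G n U u
    = (1 - u ^ 2) • (1 : Matrix (V × Fin n) (V × Fin n) ℂ) + u ^ 2 • mDg G n - u • mAt G n U := by
  ext ⟨x, i⟩ ⟨y, j⟩
  simp only [DeltaBlock, mDg, mAt, Matrix.sub_apply, Matrix.add_apply, Matrix.smul_apply,
    Matrix.one_apply, smul_eq_mul, Prod.mk.injEq]
  by_cases hxy : x = y
  · subst hxy
    have hadj : ¬ G.Adj x x := G.irrefl
    by_cases hij : i = j <;> simp [hij, hadj] <;> ring
  · simp only [hxy, if_neg, false_and, if_false, hxy]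
    by_cases h : G.Adj x y
    · rw [dif_pos h, dif_pos h.symm]
      ring
    · have h' : ¬ G.Adj y x := fun hh => h hh.symm
      simp [hxy, h, h']

lemma L5 (u : ℂ) :
    (1 - u • Tblock G n U) * (u • mNbInv G n U - mSb G n) = -(mSb G n * DeltaBlock G n U u) := by
  have e1 := L1 G n U hUinv hUrev
  have e2 := L2 G n U hUinv hUrev
  have e3 := L3 G n U hUinv hUrev
  have e6 := L6 G n U hUinv hUrev
  have e7 := L7 G n U hUinv hUrev
  rw [L4 G n U hUinv hUrev u, e1]
  simp only [Matrix.sub_mul, Matrix.mul_sub, Matrix.one_mul, Matrix.mul_one,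
    Matrix.smul_mul, Matrix.mul_smul, Matrix.mul_assoc, e2, e3, e6, e7,
    Matrix.mul_add, Matrix.add_mul, Matrix.mul_sub, Matrix.sub_mul]
  module

end Lems

section Orient

variable {V : Type*} (G : SimpleGraph V) [Fintype V] [DecidableEq V] [DecidableRel G.Adj]
  (f : V → ℕ) (hf : Function.Injective f)

/-- positively oriented darts -/
def PosDart : Type _ := {d : G.Dart // f d.fst < f d.snd}

instance : Fintype (PosDart G f) := Subtype.fintype _
instance : DecidableEq (PosDart G f) := Subtype.instDecidableEq

include hf in
lemma pos_or (d : G.Dart) : f d.fst < f d.snd ∨ f d.snd < f d.fst :=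
  Ne.lt_or_gt (fun h => SimpleGraph.Dart.fst_ne_snd d (hf h))

lemma not_pos_symm (d : G.Dart) (h : f d.fst < f d.snd) :
    ¬ f d.symm.fst < f d.symm.snd := by
  simp only [SimpleGraph.Dart.symm_toProd, Prod.fst_swap, Prod.snd_swap]
  exact not_lt.mpr h.le

include hf in
lemma pos_symm_of_not (d : G.Dart) (h : ¬ f d.fst < f d.snd) :
    f d.symm.fst < f d.symm.snd := by
  have := (pos_or G f hf d).resolve_left h
  simpa only [SimpleGraph.Dart.symm_toProd, Prod.fst_swap, Prod.snd_swap] using this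

/-- the dart associated to a positive dart and a direction bit -/
def dartOf (p : PosDart G f) (b : Bool) : G.Dart := bif b then p.1 else p.1.symm

lemma dartOf_pos (p : PosDart G f) : ∀ b, (f (dartOf G f p b).fst < f (dartOf G f p b).snd) ↔ b = true
  | true => by simpa [dartOf] using p.2
  | false => by simpa [dartOf] using not_pos_symm G f _ p.2

lemma dartOf_symm (p : PosDart G f) (b : Bool) : (dartOf G f p b).symm = dartOf G f p (!b) := by
  cases b <;> simp [dartOf, SimpleGraph.Dart.symm_symm]

lemma dartOf_inj (p q : PosDart G f) (b c : Bool) :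
    dartOf G f p b = dartOf G f q c ↔ p = q ∧ b = c := by
  constructor
  · intro h
    have hb : b = c := by
      have := dartOf_pos G f q c
      rw [← h, dartOf_pos G f p b] at this
      cases b <;> cases c <;> simp_all
    subst hb
    refine ⟨Subtype.ext ?_, rfl⟩
    cases b
    · simpa [dartOf] using congrArg SimpleGraph.Dart.symm h
    · simpa [dartOf] using h
  · rintro ⟨rfl, rfl⟩; rfl

lemma dartOf_symm_inj (p q : PosDart G f) (b c : Bool) :
    dartOf G f q c = (dartOf G f p b).symm ↔ p = q ∧ c = !b := by
  rw [dartOf_symm, dartOf_inj]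
  tauto

/-- Darts are equivalent to positive darts times a direction bit. -/
def dartEquiv : G.Dart ≃ PosDart G f × Bool where
  toFun d := if h : f d.fst < f d.snd then (⟨d, h⟩, true)
    else (⟨d.symm, pos_symm_of_not G f hf d h⟩, false)
  invFun p := dartOf G f p.1 p.2
  left_inv d := by
    by_cases h : f d.fst < f d.snd
    · simp [h, dartOf]
    · simp [h, dartOf, SimpleGraph.Dart.symm_symm]
  right_inv p := by
    rcases p with ⟨p, b⟩
    cases b
    · have h1 : ¬ f ((p.1.symm).fst) < f ((p.1.symm).snd) := by
        simpa [dartOf] using (dartOf_pos G f p false).not.mpr (by simp)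
      simp only [dartOf, cond_false, dif_neg h1]
      simp [SimpleGraph.Dart.symm_symm]
      rw [dif_neg (not_lt.mpr (le_of_lt p.2))]
      rfl
    · have h1 : f (p.1.fst) < f (p.1.snd) := p.2
      simp only [dartOf, cond_true, dif_pos h1]
      exact dif_pos h1

include hf in
lemma card_posDart : Fintype.card (PosDart G f) = G.edgeFinset.card := by
  have h1 : Fintype.card G.Dart = Fintype.card (PosDart G f) * 2 := by
    rw [Fintype.card_congr (dartEquiv G f hf), Fintype.card_prod, Fintype.card_bool]
  have h2 := G.dart_card_eq_twice_card_edges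
  omega

end Orient

section DetJ

variable {V : Type*} (G : SimpleGraph V) [Fintype V] [DecidableEq V] [DecidableRel G.Adj]
  (n : ℕ) (U : G.Dart → Matrix (Fin n) (Fin n) ℂ)
  (f : V → ℕ) (hf : Function.Injective f)

noncomputable def Kblk (u : ℂ) (p : PosDart G f) : Matrix (Bool × Fin n) (Bool × Fin n) ℂ :=
  fun bi cj => (if bi.1 = cj.1 ∧ bi.2 = cj.2 then 1 else 0)
    + u * (if cj.1 = !bi.1 then U (dartOf G f p cj.1) bi.2 cj.2 else 0)

/-- reindexing of dart blocks by positive darts and a direction bit -/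
def psiE : (G.Dart × Fin n) ≃ ((Bool × Fin n) × PosDart G f) :=
  (Equiv.prodCongr (dartEquiv G f hf) (Equiv.refl (Fin n))).trans
    ((Equiv.prodAssoc _ _ _).trans (Equiv.prodComm _ _))

lemma psiE_symm_apply (b : Bool) (i : Fin n) (p : PosDart G f) :
    (psiE G n f hf).symm ((b, i), p) = (dartOf G f p b, i) := rfl

lemma reindexJ (u : ℂ) :
    Matrix.reindex (psiE G n f hf) (psiE G n f hf) (1 + u • mJU G n U)
      = Matrix.blockDiagonal (Kblk G n U f u) := by
  ext ⟨⟨b, i⟩, p⟩ ⟨⟨c, j⟩, q⟩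
  rw [Matrix.reindex_apply, Matrix.submatrix_apply, psiE_symm_apply, psiE_symm_apply]
  simp only [Matrix.add_apply, Matrix.smul_apply, Matrix.one_apply, mJU, smul_eq_mul,
    Matrix.blockDiagonal_apply, Kblk, Prod.mk.injEq]
  by_cases hpq : p = q
  · subst hpq
    simp [dartOf_inj, dartOf_symm_inj, and_assoc]
  · simp [dartOf_inj, dartOf_symm_inj, hpq]

lemma detK (hUinv : ∀ d, IsUnit (U d)) (hUrev : ∀ d, U d.symm = (U d)⁻¹) (u : ℂ)
    (p : PosDart G f) : (Kblk G n U f u p).det = (1 - u ^ 2) ^ n := by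
  have hre : Matrix.reindex (Equiv.boolProdEquivSum (Fin n)) (Equiv.boolProdEquivSum (Fin n))
      (Kblk G n U f u p)
      = Matrix.fromBlocks 1 (u • U p.1) (u • U p.1.symm) 1 := by
    ext i j
    rcases i with i | i <;> rcases j with j | j <;>
      simp [Kblk, Equiv.boolProdEquivSum, Matrix.fromBlocks, dartOf, Matrix.one_apply]
  rw [← Matrix.det_reindex_self (Equiv.boolProdEquivSum (Fin n)) (Kblk G n U f u p), hre,
    Matrix.det_fromBlocks_one₁₁]
  have h1 : (u • U p.1.symm) * (u • U p.1) = (u ^ 2) • (1 : Matrix (Fin n) (Fin n) ℂ) := by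
    rw [smul_mul_assoc, mul_smul_comm, smul_smul, hUrev, Matrix.nonsing_inv_mul _
      ((Matrix.isUnit_iff_isUnit_det _).mp (hUinv _)), ← pow_two]
  rw [h1]
  have h2 : (1 : Matrix (Fin n) (Fin n) ℂ) - (u ^ 2) • 1 = (1 - u ^ 2) • 1 := by
    rw [sub_smul, one_smul]
  rw [h2, Matrix.det_smul, Matrix.det_one, mul_one, Fintype.card_fin]

include hf in
lemma detJ (hUinv : ∀ d, IsUnit (U d)) (hUrev : ∀ d, U d.symm = (U d)⁻¹) (u : ℂ) :
    (1 + u • mJU G n U).det = (1 - u ^ 2) ^ (n * G.edgeFinset.card) := by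
  rw [← Matrix.det_reindex_self (psiE G n f hf) (1 + u • mJU G n U), reindexJ,
    Matrix.det_blockDiagonal]
  have : ∀ p : PosDart G f, (Kblk G n U f u p).det = (1 - u ^ 2) ^ n :=
    detK G n U f hUinv hUrev u
  rw [Finset.prod_congr rfl (fun p _ => this p), Finset.prod_const, Finset.card_univ,
    card_posDart G f hf, ← pow_mul]

end DetJ

lemma fromBlocks_congr {l m o p : Type*} {A A' : Matrix l m ℂ} {B B' : Matrix l p ℂ}
    {C C' : Matrix o m ℂ} {D D' : Matrix o p ℂ}
    (h1 : A = A') (h2 : B = B') (h3 : C = C') (h4 : D = D') :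
    Matrix.fromBlocks A B C D = Matrix.fromBlocks A' B' C' D' := by
  rw [h1, h2, h3, h4]

section Main

variable {V : Type*} (G : SimpleGraph V) [Fintype V] [DecidableEq V] [DecidableRel G.Adj]
  (n : ℕ) (U : G.Dart → Matrix (Fin n) (Fin n) ℂ)
  (hUinv : ∀ d, IsUnit (U d)) (hUrev : ∀ d, U d.symm = (U d)⁻¹) (u : ℂ)

include hUinv hUrev in
theorem bass_main :
    (1 - u ^ 2) ^ (n * Fintype.card V) * Matrix.det (1 - u • Tblock G n U) =
      (1 - u ^ 2) ^ (n * G.edgeFinset.card) * Matrix.det (DeltaBlock G n U u) := by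
  have e1 := L1 G n U hUinv hUrev
  have e2 := L2 G n U hUinv hUrev
  have e3 := L3 G n U hUinv hUrev
  have e4 := L4 G n U hUinv hUrev u
  have e5 := L5 G n U hUinv hUrev u
  have key : Matrix.fromBlocks ((1 - u ^ 2) • (1 : Matrix (V × Fin n) (V × Fin n) ℂ))
        (u • mNU G n U) 0 (1 - u • Tblock G n U)
      * Matrix.fromBlocks 1 0 (u • mNbInv G n U - mSb G n) 1
      = Matrix.fromBlocks 1 0 (-(mSb G n)) 1
      * Matrix.fromBlocks (DeltaBlock G n U u) (u • mNU G n U) 0 (1 + u • mJU G n U) := by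
    rw [Matrix.fromBlocks_multiply, Matrix.fromBlocks_multiply]
    apply fromBlocks_congr
    · -- A block
      rw [e4]
      simp only [Matrix.mul_one, Matrix.one_mul, Matrix.mul_zero, Matrix.zero_mul,
        add_zero, Matrix.mul_sub, Matrix.smul_mul, Matrix.mul_smul, e2, e3, smul_smul]
      module
    · -- B block
      simp
    · -- C block
      simp only [Matrix.zero_mul, zero_add, Matrix.mul_zero, add_zero, e5, Matrix.neg_mul]
    · -- D block
      rw [e1]
      simp only [Matrix.mul_zero, Matrix.zero_mul, Matrix.mul_one, Matrix.one_mul,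
        Matrix.mul_smul, Matrix.neg_mul, zero_add]
      module

  have hdet := congrArg Matrix.det key
  rw [Matrix.det_mul, Matrix.det_mul, Matrix.det_fromBlocks_zero₂₁,
    Matrix.det_fromBlocks_zero₁₂, Matrix.det_fromBlocks_zero₁₂,
    Matrix.det_fromBlocks_zero₂₁] at hdet
  simp only [Matrix.det_one, one_mul, mul_one] at hdet
  have hJ : (1 + u • mJU G n U).det = (1 - u ^ 2) ^ (n * G.edgeFinset.card) := by
    exact detJ G n U (fun v => (Fintype.equivFin V v : ℕ))
      (Function.Injective.comp (fun a b h => Fin.ext h) (Fintype.equivFin V).injective)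
      hUinv hUrev u
  have hV : ((1 - u ^ 2) • (1 : Matrix (V × Fin n) (V × Fin n) ℂ)).det
      = (1 - u ^ 2) ^ (n * Fintype.card V) := by
    rw [Matrix.det_smul, Matrix.det_one, mul_one, Fintype.card_prod, Fintype.card_fin,
      mul_comm]
  rw [hJ, hV] at hdet
  linear_combination hdet

end Main

/-- **Bass determinant lemma** for a unitary-type potential `U` on oriented edges:
`(1 − u²)^{n|V|} · det(I − u·T) = (1 − u²)^{n|E|} · det(Δ(u))`. -/
theorem bass_determinant_lemma (G : SimpleGraph V) [Fintype V] [DecidableEq V]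
    [DecidableRel G.Adj] (n : ℕ) (hn : 1 ≤ n)
    (U : G.Dart → Matrix (Fin n) (Fin n) ℂ)
    (hUinv : ∀ d, IsUnit (U d)) (hUrev : ∀ d, U d.symm = (U d)⁻¹) (u : ℂ) :
    (1 - u ^ 2) ^ (n * Fintype.card V) * Matrix.det (1 - u • Tblock G n U) =
      (1 - u ^ 2) ^ (n * G.edgeFinset.card) * Matrix.det (DeltaBlock G n U u) := by
  exact bass_main G n U hUinv hUrev u
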